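/- Let G be a group, κ a field, κ_par G the partial group algebra, B ⊆ κ_par G the commutative subalgebra generated by the idempotents e_g = [g][g⁻¹], W a set of idempotents in B, and 𝒲 the two-sided ideal of κ_par G generated by W. Then for every left ideal I of κ_par G one has 𝒲 ∩ I = 𝒲·I; consequently κ_par G/𝒲 is flat as a right κ_par G-module. -/
import Mathlib


/-- The defining relations of the partial group algebra `κ_par G = κ S(G)`:
`[g⁻¹][g][h] = [g⁻¹][gh]`, `[g][h][h⁻¹] = [gh][h⁻¹]`, `[g][1] = [1][g] = [g]`. -/
inductive PGARel (κ : Type) (G : Type) [Field κ] [Group G] :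
    FreeAlgebra κ G → FreeAlgebra κ G → Prop
  | left (g h : G) :
      PGARel κ G (FreeAlgebra.ι κ g⁻¹ * FreeAlgebra.ι κ g * FreeAlgebra.ι κ h)
        (FreeAlgebra.ι κ g⁻¹ * FreeAlgebra.ι κ (g * h))
  | right (g h : G) :
      PGARel κ G (FreeAlgebra.ι κ g * FreeAlgebra.ι κ h * FreeAlgebra.ι κ h⁻¹)
        (FreeAlgebra.ι κ (g * h) * FreeAlgebra.ι κ h⁻¹)
  | mul_one (g : G) :
      PGARel κ G (FreeAlgebra.ι κ g * FreeAlgebra.ι κ 1) (FreeAlgebra.ι κ g)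
  | one_mul (g : G) :
      PGARel κ G (FreeAlgebra.ι κ 1 * FreeAlgebra.ι κ g) (FreeAlgebra.ι κ g)

/-- The partial group algebra `κ_par G`. -/
abbrev PartialGroupAlgebra (κ : Type) (G : Type) [Field κ] [Group G] : Type :=
  RingQuot (PGARel κ G)

/-- The canonical generator `[g]` of `κ_par G`. -/
def pgaGen (κ : Type) (G : Type) [Field κ] [Group G] (g : G) :
    PartialGroupAlgebra κ G :=
  RingQuot.mkAlgHom κ (PGARel κ G) (FreeAlgebra.ι κ g)

/-- The idempotent `e_g = [g][g⁻¹]` of `κ_par G`. -/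
def pgaIdem (κ : Type) (G : Type) [Field κ] [Group G] (g : G) :
    PartialGroupAlgebra κ G :=
  pgaGen κ G g * pgaGen κ G g⁻¹

/-- The commutative subalgebra `B ⊆ κ_par G` generated by the idempotents `e_g`. -/
def pgaB (κ : Type) (G : Type) [Field κ] [Group G] :
    Subalgebra κ (PartialGroupAlgebra κ G) :=
  Algebra.adjoin κ (Set.range (pgaIdem κ G))

section RightFlat

variable (R : Type*) [Ring R] (M : Type*) [AddCommGroup M] [Module Rᵐᵒᵖ M]

/-- The left `R`-module structure on the character module `M⋆ = Hom_ℤ(M, ℚ/ℤ)` of a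
right `R`-module `M`, given by `(r • c)(m) = c(m·r)`. -/
noncomputable instance characterModuleLeftModule : Module R (CharacterModule M) where
  smul r c := c.comp (AddMonoidHom.mk' (fun x => MulOpposite.op r • x) fun a b => smul_add _ a b)
  one_smul c := DFunLike.ext _ _ fun x => by
    show c (MulOpposite.op (1 : R) • x) = c x
    rw [MulOpposite.op_one, one_smul]
  mul_smul r s c := DFunLike.ext _ _ fun x => by
    show c (MulOpposite.op (r * s) • x) = c (MulOpposite.op s • MulOpposite.op r • x)
    rw [MulOpposite.op_mul, mul_smul]
  smul_zero r := DFunLike.ext _ _ fun x => rfl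
  smul_add r c d := DFunLike.ext _ _ fun x => rfl
  add_smul r s c := DFunLike.ext _ _ fun x => by
    show c (MulOpposite.op (r + s) • x) =
      c (MulOpposite.op r • x) + c (MulOpposite.op s • x)
    rw [MulOpposite.op_add, add_smul, map_add]
  zero_smul c := DFunLike.ext _ _ fun x => by
    show c (MulOpposite.op (0 : R) • x) = 0
    rw [MulOpposite.op_zero, zero_smul, map_zero]

/-- A right `R`-module `M` is flat iff its character module `M⋆ = Hom_ℤ(M, ℚ/ℤ)` is an
injective left `R`-module (Lambek's criterion); we take this as the definition of
flatness for right modules over a (possibly noncommutative) ring. -/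
def RightModuleFlat : Prop :=
  Module.Injective R (CharacterModule M)

end RightFlat

section PGAAux

variable {κ G : Type} [Field κ] [Group G]

namespace PGAAux


/-! ### Basic relations in the partial group algebra -/

lemma rel_left (g h : G) :
    pgaGen κ G g⁻¹ * pgaGen κ G g * pgaGen κ G h = pgaGen κ G g⁻¹ * pgaGen κ G (g * h) := by
  simpa [pgaGen, map_mul] using RingQuot.mkAlgHom_rel κ (PGARel.left (κ := κ) g h)

lemma rel_right (g h : G) :
    pgaGen κ G g * pgaGen κ G h * pgaGen κ G h⁻¹ = pgaGen κ G (g * h) * pgaGen κ G h⁻¹ := by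
  simpa [pgaGen, map_mul] using RingQuot.mkAlgHom_rel κ (PGARel.right (κ := κ) g h)

lemma rel_one_mul (g : G) : pgaGen κ G 1 * pgaGen κ G g = pgaGen κ G g := by
  simpa [pgaGen, map_mul] using RingQuot.mkAlgHom_rel κ (PGARel.one_mul (κ := κ) g)

lemma gen_sandwich (g : G) :
    pgaGen κ G g * pgaGen κ G g⁻¹ * pgaGen κ G g = pgaGen κ G g := by
  have h1 := rel_right (κ := κ) g g⁻¹
  rw [inv_inv, mul_inv_cancel] at h1
  rw [h1, rel_one_mul]

lemma gen_mul_idem (g h : G) :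
    pgaGen κ G g * pgaIdem κ G h = pgaIdem κ G (g * h) * pgaGen κ G g := by
  have h1 := rel_right (κ := κ) g h
  have h2 := rel_left (κ := κ) (g * h)⁻¹ g
  rw [inv_inv] at h2
  rw [show (g * h)⁻¹ * g = h⁻¹ by group] at h2
  rw [pgaIdem, pgaIdem, ← mul_assoc, h1, h2]

lemma idem_mul_gen (g h : G) :
    pgaIdem κ G g * pgaGen κ G h = pgaGen κ G h * pgaIdem κ G (h⁻¹ * g) := by
  have := gen_mul_idem (κ := κ) h (h⁻¹ * g)
  rw [show h * (h⁻¹ * g) = g by group] at this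
  exact this.symm

lemma idem_comm (g h : G) :
    pgaIdem κ G g * pgaIdem κ G h = pgaIdem κ G h * pgaIdem κ G g := by
  have h1 := idem_mul_gen (κ := κ) g h
  have h2 := idem_mul_gen (κ := κ) (h⁻¹ * g) h⁻¹
  rw [show h⁻¹⁻¹ * (h⁻¹ * g) = g by group] at h2
  show pgaIdem κ G g * (pgaGen κ G h * pgaGen κ G h⁻¹) =
    (pgaGen κ G h * pgaGen κ G h⁻¹) * pgaIdem κ G g
  rw [← mul_assoc, h1, mul_assoc, h2, ← mul_assoc]

lemma idem_mem_B (g : G) : pgaIdem κ G g ∈ pgaB κ G :=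
  Algebra.subset_adjoin ⟨g, rfl⟩

lemma B_mul_comm {x y : (PartialGroupAlgebra κ G)} (hx : x ∈ pgaB κ G) (hy : y ∈ pgaB κ G) :
    x * y = y * x := by
  induction hx, hy using Algebra.adjoin_induction₂ with
  | mem_mem a b ha hb =>
      obtain ⟨g, rfl⟩ := ha; obtain ⟨h, rfl⟩ := hb; exact idem_comm g h
  | algebraMap_both r s => rw [← map_mul, ← map_mul, mul_comm r s]
  | algebraMap_left r a _ => exact Algebra.commutes r a
  | algebraMap_right r a _ => exact (Algebra.commutes r a).symm
  | add_left a b c _ _ _ h1 h2 => rw [add_mul, mul_add, h1, h2]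
  | add_right a b c _ _ _ h1 h2 => rw [mul_add, add_mul, h1, h2]
  | mul_left a b c _ _ _ h1 h2 => rw [mul_assoc, h2, ← mul_assoc, h1, mul_assoc]
  | mul_right a b c _ _ _ h1 h2 => rw [← mul_assoc, h1, mul_assoc, h2, ← mul_assoc]

lemma gen_inv_mul_gen (g : G) :
    pgaGen κ G g⁻¹ * pgaGen κ G g = pgaIdem κ G g⁻¹ := by
  show _ = pgaGen κ G g⁻¹ * pgaGen κ G g⁻¹⁻¹
  rw [inv_inv]

lemma idem_inv_mul_gen_inv (g : G) :
    pgaIdem κ G g⁻¹ * pgaGen κ G g⁻¹ = pgaGen κ G g⁻¹ :=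
  gen_sandwich g⁻¹

lemma gen_mul_idem_inv (g : G) :
    pgaGen κ G g * pgaIdem κ G g⁻¹ = pgaGen κ G g := by
  show pgaGen κ G g * (pgaGen κ G g⁻¹ * pgaGen κ G g⁻¹⁻¹) = pgaGen κ G g
  rw [inv_inv, ← mul_assoc]
  exact gen_sandwich g

lemma conj_mul_conj (g : G) {f₁ f₂ : (PartialGroupAlgebra κ G)} (h₂ : f₂ ∈ pgaB κ G) :
    (pgaGen κ G g * f₁ * pgaGen κ G g⁻¹) * (pgaGen κ G g * f₂ * pgaGen κ G g⁻¹) =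
      pgaGen κ G g * (f₁ * f₂) * pgaGen κ G g⁻¹ := by
  calc (pgaGen κ G g * f₁ * pgaGen κ G g⁻¹) * (pgaGen κ G g * f₂ * pgaGen κ G g⁻¹)
      = pgaGen κ G g * (f₁ * ((pgaGen κ G g⁻¹ * pgaGen κ G g) * f₂)) * pgaGen κ G g⁻¹ := by
        noncomm_ring
    _ = pgaGen κ G g * (f₁ * (f₂ * pgaIdem κ G g⁻¹)) * pgaGen κ G g⁻¹ := by
        rw [gen_inv_mul_gen, B_mul_comm (idem_mem_B g⁻¹) h₂]
    _ = pgaGen κ G g * (f₁ * f₂) * (pgaIdem κ G g⁻¹ * pgaGen κ G g⁻¹) := by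
        noncomm_ring
    _ = pgaGen κ G g * (f₁ * f₂) * pgaGen κ G g⁻¹ := by rw [idem_inv_mul_gen_inv]

lemma conj_absorb (g : G) {f : (PartialGroupAlgebra κ G)} (hB : f ∈ pgaB κ G) (hf : f * f = f) :
    (pgaGen κ G g * f * pgaGen κ G g⁻¹) * (pgaGen κ G g * f) = pgaGen κ G g * f := by
  calc (pgaGen κ G g * f * pgaGen κ G g⁻¹) * (pgaGen κ G g * f)
      = pgaGen κ G g * ((f * (pgaGen κ G g⁻¹ * pgaGen κ G g)) * f) := by noncomm_ring
    _ = pgaGen κ G g * ((pgaIdem κ G g⁻¹ * f) * f) := by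
        rw [gen_inv_mul_gen, B_mul_comm hB (idem_mem_B g⁻¹)]
    _ = (pgaGen κ G g * pgaIdem κ G g⁻¹) * (f * f) := by noncomm_ring
    _ = pgaGen κ G g * f := by rw [gen_mul_idem_inv, hf]

lemma conj_mem_B (g : G) {f : (PartialGroupAlgebra κ G)} (hf : f ∈ pgaB κ G) :
    pgaGen κ G g * f * pgaGen κ G g⁻¹ ∈ pgaB κ G := by
  induction hf using Algebra.adjoin_induction with
  | mem a ha =>
      obtain ⟨h, rfl⟩ := ha
      have : pgaGen κ G g * pgaIdem κ G h * pgaGen κ G g⁻¹ =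
          pgaIdem κ G (g * h) * pgaIdem κ G g := by
        rw [gen_mul_idem, mul_assoc]; rfl
      rw [this]
      exact mul_mem (idem_mem_B _) (idem_mem_B _)
  | algebraMap r =>
      have : pgaGen κ G g * algebraMap κ (PartialGroupAlgebra κ G) r * pgaGen κ G g⁻¹ =
          algebraMap κ (PartialGroupAlgebra κ G) r * pgaIdem κ G g := by
        rw [← Algebra.commutes r (pgaGen κ G g), mul_assoc]; rfl
      rw [this]
      exact mul_mem (Subalgebra.algebraMap_mem _ r) (idem_mem_B g)
  | add a b _ _ h1 h2 =>
      rw [mul_add, add_mul]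
      exact add_mem h1 h2
  | mul a b ha hb h1 h2 =>
      rw [← conj_mul_conj g hb]
      exact mul_mem h1 h2

/-! ### The ideal generated by `W` -/

variable (W : Set (PartialGroupAlgebra κ G))

/-- The two-sided ideal generated by `W`, realized as a left ideal over the
two-sided-closed generating set. -/
def WIdeal : Ideal (PartialGroupAlgebra κ G) :=
  Ideal.span {x | ∃ w ∈ W, ∃ a b : (PartialGroupAlgebra κ G), x = a * w * b}

/-- Its opposite-side counterpart. -/
def WopIdeal : Ideal (PartialGroupAlgebra κ G)ᵐᵒᵖ :=
  Ideal.span {x : (PartialGroupAlgebra κ G)ᵐᵒᵖ | ∃ w ∈ W, ∃ a b : (PartialGroupAlgebra κ G)ᵐᵒᵖ, x = a * MulOpposite.op w * b}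

variable {W}

lemma WIdeal_mul_right {x : (PartialGroupAlgebra κ G)} (hx : x ∈ WIdeal W) (c : (PartialGroupAlgebra κ G)) : x * c ∈ WIdeal W := by
  induction hx using Submodule.span_induction with
  | mem y hy =>
      obtain ⟨w, hw, a, b, rfl⟩ := hy
      exact Ideal.subset_span ⟨w, hw, a, b * c, by noncomm_ring⟩
  | zero => simpa using (WIdeal W).zero_mem
  | add u v _ _ h1 h2 => rw [add_mul]; exact add_mem h1 h2
  | smul r u _ h => rw [smul_eq_mul, mul_assoc]; exact Ideal.mul_mem_left _ r h

lemma WopIdeal_mul_right {x : (PartialGroupAlgebra κ G)ᵐᵒᵖ} (hx : x ∈ WopIdeal W) (c : (PartialGroupAlgebra κ G)ᵐᵒᵖ) :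
    x * c ∈ WopIdeal W := by
  induction hx using Submodule.span_induction with
  | mem y hy =>
      obtain ⟨w, hw, a, b, rfl⟩ := hy
      exact Ideal.subset_span ⟨w, hw, a, b * c, by noncomm_ring⟩
  | zero => simpa using (WopIdeal W).zero_mem
  | add u v _ _ h1 h2 => rw [add_mul]; exact add_mem h1 h2
  | smul r u _ h => rw [smul_eq_mul, mul_assoc]; exact Ideal.mul_mem_left _ r h

lemma mem_WIdeal_of_mem {w : (PartialGroupAlgebra κ G)} (hw : w ∈ W) : w ∈ WIdeal W :=
  Ideal.subset_span ⟨w, hw, 1, 1, by rw [one_mul, mul_one]⟩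

lemma op_mem_WopIdeal {x : (PartialGroupAlgebra κ G)} (hx : x ∈ WIdeal W) :
    MulOpposite.op x ∈ WopIdeal W := by
  induction hx using Submodule.span_induction with
  | mem y hy =>
      obtain ⟨w, hw, a, b, rfl⟩ := hy
      exact Ideal.subset_span
        ⟨w, hw, MulOpposite.op b, MulOpposite.op a, by simp [mul_assoc]⟩
  | zero => simpa using (WopIdeal W).zero_mem
  | add u v _ _ h1 h2 => rw [MulOpposite.op_add]; exact add_mem h1 h2
  | smul r u _ h =>
      rw [smul_eq_mul, MulOpposite.op_mul]
      exact WopIdeal_mul_right h _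

lemma unop_mem_WIdeal {x : (PartialGroupAlgebra κ G)ᵐᵒᵖ} (hx : x ∈ WopIdeal W) :
    MulOpposite.unop x ∈ WIdeal W := by
  induction hx using Submodule.span_induction with
  | mem y hy =>
      obtain ⟨w, hw, a, b, rfl⟩ := hy
      exact Ideal.subset_span
        ⟨w, hw, MulOpposite.unop b, MulOpposite.unop a, by simp [mul_assoc]⟩
  | zero => simpa using (WIdeal W).zero_mem
  | add u v _ _ h1 h2 => rw [MulOpposite.unop_add]; exact add_mem h1 h2
  | smul r u _ h =>
      rw [smul_eq_mul, MulOpposite.unop_mul]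
      exact WIdeal_mul_right h _

/-! ### Combining absorbing idempotents -/

lemma combine_idem {A : Type*} [Ring A] {a b : A} (ha : a * a = a) (hb : b * b = b)
    (hc : a * b = b * a) :
    (a + b - a * b) * (a + b - a * b) = a + b - a * b := by
  have h1 : a * (a * b) = a * b := by rw [← mul_assoc, ha]
  have h2 : (a * b) * b = a * b := by rw [mul_assoc, hb]
  have h4 : b * (a * b) = a * b := by rw [← mul_assoc, ← hc, mul_assoc, hb]
  have h5 : (a * b) * a = a * b := by rw [mul_assoc, ← hc, ← mul_assoc, ha]
  have h3 : (a * b) * (a * b) = a * b := by rw [← mul_assoc, h5, h2]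
  have e1 : (a + b) * (a + b) = a + b + (a * b + a * b) := by
    rw [add_mul, mul_add, mul_add, ha, hb, ← hc]; abel
  have e2 : (a + b) * (a * b) = a * b + a * b := by rw [add_mul, h1, h4]
  have e3 : (a * b) * (a + b) = a * b + a * b := by rw [mul_add, h5, h2]
  calc (a + b - a * b) * (a + b - a * b)
      = (a + b) * (a + b) - (a + b) * (a * b) - ((a * b) * (a + b) - (a * b) * (a * b)) := by
        rw [sub_mul, mul_sub, mul_sub]
    _ = a + b - a * b := by rw [e1, e2, e3, h3]; abel

lemma combine_absorb {A : Type*} [Ring A] {a b x y : A} (hc : a * b = b * a)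
    (hx : a * x = x) (hy : b * y = y) :
    (a + b - a * b) * (x + y) = x + y := by
  have k1 : (a * b) * x = b * x := by rw [hc, mul_assoc, hx]
  have k2 : (a * b) * y = a * y := by rw [mul_assoc, hy]
  calc (a + b - a * b) * (x + y)
      = (a * x + a * y) + (b * x + b * y) - ((a * b) * x + (a * b) * y) := by
        rw [sub_mul, add_mul, mul_add, mul_add, mul_add]
    _ = x + y := by rw [hx, hy, k1, k2]; abel

lemma combine (hWB : ∀ w ∈ W, w ∈ pgaB κ G) {e₁ e₂ x y : (PartialGroupAlgebra κ G)}
    (h1W : e₁ ∈ WIdeal W) (h1B : e₁ ∈ pgaB κ G) (h1i : e₁ * e₁ = e₁)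
    (h2W : e₂ ∈ WIdeal W) (h2B : e₂ ∈ pgaB κ G) (h2i : e₂ * e₂ = e₂)
    (hx : e₁ * x = x) (hy : e₂ * y = y) :
    ∃ u, u ∈ WIdeal W ∧ u ∈ pgaB κ G ∧ u * u = u ∧ u * (x + y) = x + y := by
  have hc : e₁ * e₂ = e₂ * e₁ := B_mul_comm h1B h2B
  exact ⟨e₁ + e₂ - e₁ * e₂,
    sub_mem (add_mem h1W h2W) (Ideal.mul_mem_left _ _ h2W),
    sub_mem (add_mem h1B h2B) (mul_mem h1B h2B),
    combine_idem h1i h2i hc,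
    combine_absorb hc hx hy⟩

/-! ### The key structural lemma -/

lemma absorb_aux (hWB : ∀ w ∈ W, w ∈ pgaB κ G) (a : (PartialGroupAlgebra κ G)) :
    ∀ f : (PartialGroupAlgebra κ G), f ∈ WIdeal W → f ∈ pgaB κ G → f * f = f →
      ∃ e, e ∈ WIdeal W ∧ e ∈ pgaB κ G ∧ e * e = e ∧ e * (a * f) = a * f := by
  obtain ⟨z, rfl⟩ := RingQuot.mkAlgHom_surjective κ (PGARel κ G) a
  induction z using FreeAlgebra.induction with
  | grade0 r =>
      intro f hfW hfB hfi
      refine ⟨f, hfW, hfB, hfi, ?_⟩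
      rw [AlgHom.commutes]
      calc f * (algebraMap κ (PartialGroupAlgebra κ G) r * f) = (f * algebraMap κ (PartialGroupAlgebra κ G) r) * f := by rw [mul_assoc]
        _ = (algebraMap κ (PartialGroupAlgebra κ G) r * f) * f := by rw [Algebra.commutes]
        _ = algebraMap κ (PartialGroupAlgebra κ G) r * (f * f) := by rw [mul_assoc]
        _ = algebraMap κ (PartialGroupAlgebra κ G) r * f := by rw [hfi]
  | grade1 g =>
      intro f hfW hfB hfi
      show ∃ e, _ ∧ _ ∧ _ ∧ e * (pgaGen κ G g * f) = pgaGen κ G g * f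
      refine ⟨pgaGen κ G g * f * pgaGen κ G g⁻¹,
        WIdeal_mul_right (Ideal.mul_mem_left _ _ hfW) _,
        conj_mem_B g hfB, ?_, conj_absorb g hfB hfi⟩
      rw [conj_mul_conj g hfB, hfi]
  | mul z₁ z₂ ih₁ ih₂ =>
      intro f hfW hfB hfi
      obtain ⟨e₁, h1W, h1B, h1i, h1⟩ := ih₂ f hfW hfB hfi
      obtain ⟨e₂, h2W, h2B, h2i, h2⟩ := ih₁ e₁ h1W h1B h1i
      refine ⟨e₂, h2W, h2B, h2i, ?_⟩
      rw [map_mul]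
      set A₁ := RingQuot.mkAlgHom κ (PGARel κ G) z₁
      set A₂ := RingQuot.mkAlgHom κ (PGARel κ G) z₂
      have step : (A₁ * e₁) * (A₂ * f) = A₁ * A₂ * f := by
        rw [mul_assoc, h1, ← mul_assoc]
      rw [← step, ← mul_assoc, h2]
  | add z₁ z₂ ih₁ ih₂ =>
      intro f hfW hfB hfi
      obtain ⟨e₁, h1W, h1B, h1i, h1⟩ := ih₁ f hfW hfB hfi
      obtain ⟨e₂, h2W, h2B, h2i, h2⟩ := ih₂ f hfW hfB hfi
      rw [map_add, add_mul]
      exact combine hWB h1W h1B h1i h2W h2B h2i h1 h2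

lemma exists_absorb (hWB : ∀ w ∈ W, w ∈ pgaB κ G) (hWidem : ∀ w ∈ W, w * w = w)
    {x : (PartialGroupAlgebra κ G)} (hx : x ∈ WIdeal W) :
    ∃ e, e ∈ WIdeal W ∧ e ∈ pgaB κ G ∧ e * e = e ∧ e * x = x := by
  induction hx using Submodule.span_induction with
  | mem y hy =>
      obtain ⟨w, hw, a, b, rfl⟩ := hy
      obtain ⟨e, h1, h2, h3, h4⟩ :=
        absorb_aux hWB a w (mem_WIdeal_of_mem hw) (hWB w hw) (hWidem w hw)
      exact ⟨e, h1, h2, h3, by rw [← mul_assoc, h4]⟩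
  | zero =>
      exact ⟨0, zero_mem _, zero_mem _, by rw [mul_zero], by rw [zero_mul]⟩
  | add u v _ _ ihu ihv =>
      obtain ⟨e₁, h1W, h1B, h1i, h1⟩ := ihu
      obtain ⟨e₂, h2W, h2B, h2i, h2⟩ := ihv
      exact combine hWB h1W h1B h1i h2W h2B h2i h1 h2
  | smul r u _ ih =>
      obtain ⟨e, h1, h2, h3, h4⟩ := ih
      obtain ⟨e₂, g1, g2, g3, g4⟩ := absorb_aux hWB r e h1 h2 h3
      refine ⟨e₂, g1, g2, g3, ?_⟩
      have hrx : (r * e) * u = r * u := by rw [mul_assoc, h4]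
      rw [smul_eq_mul, ← hrx, ← mul_assoc, g4]

end PGAAux

end PGAAux

open MulOpposite in
/-- Let `W` be a set of idempotents in the subalgebra `B` of the
partial group algebra `κ_par G` and `𝒲` the two-sided ideal generated by `W`.  Then for
every left ideal `I` one has `𝒲 ∩ I = 𝒲·I`; consequently `κ_par G/𝒲` is flat as a right
`κ_par G`-module (the latter realized as the left `(κ_par G)ᵐᵒᵖ`-module `(κ_par G)ᵐᵒᵖ/𝒲ᵒᵖ`). -/
theorem partialGroupAlgebra_quotient_by_idempotent_ideal_flat
    {κ G : Type} [Field κ] [Group G]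
    (W : Set (PartialGroupAlgebra κ G))
    (hWB : ∀ w ∈ W, w ∈ pgaB κ G)
    (hWidem : ∀ w ∈ W, w * w = w) :
    (∀ I : Ideal (PartialGroupAlgebra κ G),
      (Ideal.span {x | ∃ w ∈ W, ∃ a b : PartialGroupAlgebra κ G, x = a * w * b}) ⊓ I =
      Ideal.span {x | ∃ w ∈ Ideal.span
          {x | ∃ w ∈ W, ∃ a b : PartialGroupAlgebra κ G, x = a * w * b},
        ∃ i ∈ I, x = w * i}) ∧
    RightModuleFlat (PartialGroupAlgebra κ G)
      ((PartialGroupAlgebra κ G)ᵐᵒᵖ ⧸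
        (Ideal.span {x : (PartialGroupAlgebra κ G)ᵐᵒᵖ |
          ∃ w ∈ W, ∃ a b : (PartialGroupAlgebra κ G)ᵐᵒᵖ, x = a * op w * b} :
          Submodule (PartialGroupAlgebra κ G)ᵐᵒᵖ (PartialGroupAlgebra κ G)ᵐᵒᵖ)) := by
  constructor
  · -- Part 1 : 𝒲 ⊓ I = 𝒲 I
    intro I
    apply le_antisymm
    · intro x hx
      rw [Submodule.mem_inf] at hx
      obtain ⟨hxW, hxI⟩ := hx
      obtain ⟨e, heW, -, -, he⟩ :=
        PGAAux.exists_absorb (W := W) hWB hWidem (x := x) hxW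
      exact Ideal.subset_span ⟨e, heW, x, hxI, he.symm⟩
    · rw [Ideal.span_le]
      rintro x ⟨w, hw, i, hi, rfl⟩
      exact Submodule.mem_inf.mpr
        ⟨PGAAux.WIdeal_mul_right (W := W) hw i, I.mul_mem_left w hi⟩
  · -- Part 2 : flatness via Baer's criterion for the character module
    show Module.Injective (PartialGroupAlgebra κ G) _
    apply Module.Baer.injective
    intro I g
    -- notation
    let Wop : Submodule (PartialGroupAlgebra κ G)ᵐᵒᵖ (PartialGroupAlgebra κ G)ᵐᵒᵖ :=
      (Ideal.span {x : (PartialGroupAlgebra κ G)ᵐᵒᵖ |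
          ∃ w ∈ W, ∃ a b : (PartialGroupAlgebra κ G)ᵐᵒᵖ, x = a * op w * b})
    have hWopEq : Wop = (PGAAux.WopIdeal W : Ideal (PartialGroupAlgebra κ G)ᵐᵒᵖ) := rfl
    -- the evaluation character on I
    let one' : (PartialGroupAlgebra κ G)ᵐᵒᵖ ⧸ Wop := Submodule.Quotient.mk 1
    let ψ : ↥I →+ AddCircle (1 : ℚ) :=
      AddMonoidHom.mk' (fun i : ↥I => g i one') (fun i j => by
        show g (i + j) one' = g i one' + g j one'
        rw [map_add]; rfl)
    -- the natural map I → Rᵒᵖ/𝒲ᵒᵖ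
    let θ : ↥I →ₗ[ℤ] ((PartialGroupAlgebra κ G)ᵐᵒᵖ ⧸ Wop) :=
      (AddMonoidHom.mk' (fun i : ↥I => (Submodule.Quotient.mk (op (i : PartialGroupAlgebra κ G)) :
          (PartialGroupAlgebra κ G)ᵐᵒᵖ ⧸ Wop))
        (fun i j => by
          show (Submodule.Quotient.mk (op ((↑(i + j) : PartialGroupAlgebra κ G))) :
            (PartialGroupAlgebra κ G)ᵐᵒᵖ ⧸ Wop) = _
          rw [Submodule.coe_add, op_add, ← Submodule.Quotient.mk_add])).toIntLinearMap
    have hθ : ∀ i : ↥I, θ i = Submodule.Quotient.mk (op (i : PartialGroupAlgebra κ G)) :=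
      fun _ => rfl
    have hψ : ∀ i : ↥I, ψ i = g i one' := fun _ => rfl
    -- the kernel of θ is killed by ψ
    have hker : LinearMap.ker θ ≤ LinearMap.ker ψ.toIntLinearMap := by
      intro i hi
      rw [LinearMap.mem_ker] at hi ⊢
      have hop : op (i : PartialGroupAlgebra κ G) ∈ PGAAux.WopIdeal W := by
        rw [← hWopEq]
        exact (Submodule.Quotient.mk_eq_zero _).mp (by rw [← hθ i]; exact hi)
      have hiW : (i : PartialGroupAlgebra κ G) ∈ PGAAux.WIdeal W := by
        simpa using PGAAux.unop_mem_WIdeal hop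
      obtain ⟨e, heW, -, -, he⟩ := PGAAux.exists_absorb (W := W) hWB hWidem hiW
      have hi' : (i : ↥I) = e • i := Subtype.ext (by
        rw [SetLike.val_smul, smul_eq_mul, he])
      have hmk : (Submodule.Quotient.mk (op e * 1) :
          (PartialGroupAlgebra κ G)ᵐᵒᵖ ⧸ Wop) = 0 := by
        refine (Submodule.Quotient.mk_eq_zero _).mpr ?_
        rw [hWopEq]
        exact PGAAux.WopIdeal_mul_right (PGAAux.op_mem_WopIdeal heW) 1
      show ψ i = 0
      calc ψ i = g i one' := rfl
        _ = g (e • i) one' := by rw [← hi']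
        _ = (e • g i) one' := by rw [map_smul]
        _ = g i (op e • one') := rfl
        _ = g i (Submodule.Quotient.mk (op e * 1)) := by
            rw [show op e • one' = Submodule.Quotient.mk (op e • (1 : (PartialGroupAlgebra κ G)ᵐᵒᵖ))
              from (Submodule.Quotient.mk_smul Wop _ _).symm, smul_eq_mul]
        _ = 0 := by rw [hmk, map_zero]
    -- lift over the quotient by ker θ and extend by injectivity of ℚ/ℤ
    obtain ⟨χ, hχ⟩ := Module.Baer.extension_property (Module.Baer.of_divisible _)
      ((LinearMap.ker θ).liftQ θ le_rfl)
      (LinearMap.ker_eq_bot.mp (Submodule.ker_liftQ_eq_bot _ θ le_rfl le_rfl))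
      ((LinearMap.ker θ).liftQ ψ.toIntLinearMap hker)
    have hkey : ∀ i : ↥I,
        χ (Submodule.Quotient.mk (op (i : PartialGroupAlgebra κ G))) = g i one' := by
      intro i
      have h1 : ((LinearMap.ker θ).liftQ θ le_rfl) (Submodule.Quotient.mk i) = θ i :=
        Submodule.liftQ_apply _ _ _
      have h2 : ((LinearMap.ker θ).liftQ ψ.toIntLinearMap hker) (Submodule.Quotient.mk i) = ψ i :=
        Submodule.liftQ_apply _ _ _
      calc χ (Submodule.Quotient.mk (op (i : PartialGroupAlgebra κ G)))
          = χ (((LinearMap.ker θ).liftQ θ le_rfl) (Submodule.Quotient.mk i)) := by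
            rw [h1, hθ]
        _ = ((LinearMap.ker θ).liftQ ψ.toIntLinearMap hker) (Submodule.Quotient.mk i) := by
            rw [← LinearMap.comp_apply, hχ]
        _ = g i one' := h2
    let χ' : CharacterModule ((PartialGroupAlgebra κ G)ᵐᵒᵖ ⧸ Wop) := χ.toAddMonoidHom
    refine ⟨LinearMap.toSpanSingleton _ _ χ', ?_⟩
    intro x hxI
    have hts : LinearMap.toSpanSingleton (PartialGroupAlgebra κ G)
        (CharacterModule ((PartialGroupAlgebra κ G)ᵐᵒᵖ ⧸ Wop)) χ' x = x • χ' := rfl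
    rw [hts]
    ext m
    obtain ⟨y, rfl⟩ := Submodule.Quotient.mk_surjective _ m
    have hmem : unop y * x ∈ I := I.mul_mem_left (unop y) hxI
    have hsub : (⟨unop y * x, hmem⟩ : ↥I) = unop y • (⟨x, hxI⟩ : ↥I) := Subtype.ext (by
      rw [SetLike.val_smul, smul_eq_mul])
    calc (x • χ') (Submodule.Quotient.mk y)
        = χ (op x • Submodule.Quotient.mk y) := rfl
      _ = χ (Submodule.Quotient.mk (op (unop y * x))) := by
          rw [show op x • (Submodule.Quotient.mk y : (PartialGroupAlgebra κ G)ᵐᵒᵖ ⧸ Wop) =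
            Submodule.Quotient.mk (op x • y) from (Submodule.Quotient.mk_smul Wop _ _).symm,
            smul_eq_mul, show op x * y = op (unop y * x) from by rw [op_mul, op_unop]]
      _ = g (⟨unop y * x, hmem⟩ : ↥I) one' := hkey ⟨unop y * x, hmem⟩
      _ = (unop y • g ⟨x, hxI⟩) one' := by rw [hsub, map_smul]
      _ = g ⟨x, hxI⟩ (op (unop y) • one') := rfl
      _ = g ⟨x, hxI⟩ (Submodule.Quotient.mk y) := by
          rw [show op (unop y) • one' = Submodule.Quotient.mk (op (unop y) •
            (1 : (PartialGroupAlgebra κ G)ᵐᵒᵖ)) from (Submodule.Quotient.mk_smul Wop _ _).symm,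
            smul_eq_mul, mul_one, op_unop]
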